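/- Let f : ℝ → ℝ be continuous with f(x) > 0 for all x, κ a real parameter, and ε ∈ {1, −1}. Suppose ψ : ℝ³ → ℂ is continuous, for every fixed (φ, x) the map θ ↦ ψ(θ, φ, x) is differentiable with ∂_θψ(θ,φ,x) = −ε · ψ(θ,φ,x) / (f(x) e^{κφ}), and ψ is square integrable on ℝ³ (∫_{ℝ³} |ψ|² dθ dφ dx < ∞). Then ψ is identically zero. (Hence the deficiency equation φ̂₁ψ = ±iψ for the constraint operator φ̂₁ = −i f(x)e^{κφ}∂_θ has no nonzero L² solutions, so both deficiency indices of φ̂₁ are zero.) -/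

import Mathlib

open MeasureTheory

lemma not_integrable_exp_mul (a : ℝ) (ha : a ≠ 0) :
    ¬ Integrable (fun θ : ℝ => Real.exp (a * θ)) := by
  intro h
  rcases lt_or_gt_of_ne ha with ha' | ha'
  · have h1 : IntegrableOn (fun _ : ℝ => (1:ℝ)) (Set.Iic 0) := by
      refine (h.integrableOn (s := Set.Iic 0)).mono' aestronglyMeasurable_const ?_
      filter_upwards [ae_restrict_mem measurableSet_Iic] with θ hθ
      simp only [norm_one]
      exact Real.one_le_exp (by nlinarith [Set.mem_Iic.mp hθ, ha'.le])
    rw [integrableOn_const_iff] at h1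
    simp [Real.volume_Iic] at h1
  · have h1 : IntegrableOn (fun _ : ℝ => (1:ℝ)) (Set.Ici 0) := by
      refine (h.integrableOn (s := Set.Ici 0)).mono' aestronglyMeasurable_const ?_
      filter_upwards [ae_restrict_mem measurableSet_Ici] with θ hθ
      simp only [norm_one]
      exact Real.one_le_exp (mul_nonneg ha'.le hθ)
    rw [integrableOn_const_iff] at h1
    simp [Real.volume_Ici] at h1

/-- No nonzero `L²` solutions of the deficiency equation `φ̂₁ψ = ±iψ` for the constraint
operator `φ̂₁ = −i f(x)e^{κφ}∂_θ`: if `ψ` is continuous, satisfies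
`∂_θψ = −ε ψ/(f(x)e^{κφ})` for `ε = ±1`, and is square integrable on `ℝ³`, then `ψ ≡ 0`.
Hence both deficiency indices of `φ̂₁` are zero. -/
theorem deficiency_indices_opPhi₁_zero
    (f : ℝ → ℝ) (hf : Continuous f) (hfpos : ∀ x, 0 < f x) (κ : ℝ)
    (ε : ℝ) (hε : ε = 1 ∨ ε = -1)
    (ψ : ℝ × ℝ × ℝ → ℂ) (hψcont : Continuous ψ)
    (hode : ∀ θ φ x : ℝ, HasDerivAt (fun t => ψ (t, φ, x))
      (-(ε : ℂ) * ψ (θ, φ, x) / ((f x : ℝ) * (Real.exp (κ * φ) : ℝ))) θ)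
    (hL2 : Integrable (fun q : ℝ × ℝ × ℝ => ‖ψ q‖ ^ 2)) :
    ∀ q : ℝ × ℝ × ℝ, ψ q = 0 := by
  have hεne : ε ≠ 0 := by rcases hε with h | h <;> simp [h]
  -- the real coefficient c φ x
  set c : ℝ → ℝ → ℝ := fun φ x => -ε / (f x * Real.exp (κ * φ)) with hc
  have hden : ∀ φ x, f x * Real.exp (κ * φ) > 0 := fun φ x =>
    mul_pos (hfpos x) (Real.exp_pos _)
  have hcne : ∀ φ x, c φ x ≠ 0 := fun φ x =>
    div_ne_zero (neg_ne_zero.2 hεne) (hden φ x).ne'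
  -- explicit solution formula
  have hsol : ∀ θ φ x : ℝ, ψ (θ, φ, x) = ψ (0, φ, x) * Complex.exp (c φ x * θ) := by
    intro θ φ x
    set g : ℝ → ℂ := fun t => ψ (t, φ, x) * Complex.exp (-(c φ x) * t) with hg
    have hderiv : ∀ t : ℝ, HasDerivAt g 0 t := by
      intro t
      have h1 : HasDerivAt (fun s : ℝ => Complex.exp (-(c φ x) * s))
          (Complex.exp (-(c φ x) * t) * (-(c φ x))) t := by
        have := ((Complex.hasDerivAt_exp (-(c φ x) * t)).comp t
          ((hasDerivAt_id t).ofReal_comp.const_mul (-(c φ x) : ℂ)))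
        simpa [Function.comp_def] using this
      have h2 := (hode t φ x).mul h1
      have : -(ε : ℂ) * ψ (t, φ, x) / ((f x : ℝ) * (Real.exp (κ * φ) : ℝ))
          = (c φ x : ℂ) * ψ (t, φ, x) := by
        push_cast [hc]
        field_simp
      rw [this] at h2
      refine h2.congr_deriv ?_
      push_cast
      ring
    have hconst : ∀ t, g t = g 0 := by
      intro t
      have : g = fun _ => g 0 := by
        funext s
        exact is_const_of_deriv_eq_zero (fun u => (hderiv u).differentiableAt)
          (fun u => (hderiv u).deriv) s 0
      exact congrFun this t
    have := hconst θ
    simp only [hg] at this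
    have hne : Complex.exp (-(c φ x) * θ) ≠ 0 := Complex.exp_ne_zero _
    field_simp at this
    rw [← neg_mul] at this
    calc ψ (θ, φ, x) = ψ (θ, φ, x) * Complex.exp (-(c φ x) * θ) * Complex.exp ((c φ x) * θ) := by
          rw [mul_assoc, ← Complex.exp_add]; simp
      _ = ψ (0, φ, x) * Complex.exp ((c φ x) * θ) := by rw [this]; simp
  -- norm formula
  have hnorm : ∀ θ φ x : ℝ, ‖ψ (θ, φ, x)‖ ^ 2
      = ‖ψ (0, φ, x)‖ ^ 2 * Real.exp (2 * c φ x * θ) := by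
    intro θ φ x
    rw [hsol θ φ x, norm_mul, mul_pow]
    congr 1
    rw [Complex.norm_exp]
    have : ((c φ x : ℂ) * (θ : ℂ)).re = c φ x * θ := by
      simp [Complex.mul_re]
    rw [this, ← Real.exp_nat_mul]
    ring_nf
  -- a.e. slices integrable
  have hslice : ∀ᵐ p : ℝ × ℝ ∂(volume : Measure (ℝ × ℝ)),
      Integrable (fun θ => ‖ψ (θ, p.1, p.2)‖ ^ 2) := by
    have : Integrable (fun q : ℝ × (ℝ × ℝ) => ‖ψ (q.1, q.2.1, q.2.2)‖ ^ 2)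
        ((volume : Measure ℝ).prod (volume : Measure (ℝ × ℝ))) := by
      rw [← Measure.volume_eq_prod]
      simpa using hL2
    exact this.prod_left_ae
  -- a.e. the value at θ = 0 vanishes
  have hzero_ae : ∀ᵐ p : ℝ × ℝ ∂(volume : Measure (ℝ × ℝ)), ψ (0, p.1, p.2) = 0 := by
    filter_upwards [hslice] with p hp
    by_contra hne
    have hk : (0:ℝ) < ‖ψ (0, p.1, p.2)‖ ^ 2 := pow_pos (norm_pos_iff.mpr hne) 2
    have : Integrable (fun θ => Real.exp (2 * c p.1 p.2 * θ)) := by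
      have h2 := hp.const_mul ((‖ψ (0, p.1, p.2)‖ ^ 2)⁻¹)
      refine h2.congr ?_
      filter_upwards with θ
      rw [hnorm θ p.1 p.2, ← mul_assoc, inv_mul_cancel₀ hk.ne', one_mul]
    exact not_integrable_exp_mul _ (by
      have := hcne p.1 p.2
      intro h
      apply this
      have : (2:ℝ) * c p.1 p.2 = 0 := h
      linarith) this
  -- continuity forces everywhere zero at θ = 0
  have hzero : ∀ φ x : ℝ, ψ (0, φ, x) = 0 := by
    have hFcont : Continuous (fun p : ℝ × ℝ => ψ (0, p.1, p.2)) :=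
      hψcont.comp (by fun_prop)
    by_contra hne
    push_neg at hne
    obtain ⟨φ₀, x₀, h₀⟩ := hne
    set U : Set (ℝ × ℝ) := {p | ψ (0, p.1, p.2) ≠ 0} with hU
    have hUopen : IsOpen U := isOpen_ne.preimage hFcont
    have hUzero : volume U = 0 := by
      have := hzero_ae
      rw [ae_iff] at this
      simpa [hU] using this
    have := hUopen.eq_empty_of_measure_zero hUzero
    rw [Set.eq_empty_iff_forall_notMem] at this
    exact this (φ₀, x₀) h₀
  intro q
  obtain ⟨θ, φ, x⟩ := q
  rw [hsol θ φ x, hzero φ x, zero_mul]
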